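/- For any sequence of undirected paths on n nodes, at the end of each round r ≤ (n−1)/2 there exist n−2r influence sets S_{p_1}(r),...,S_{p_{n−2r}}(r) such that each has size at least 2r+1 and for every nonempty I ⊆ {1,...,n−2r}, |⋃_{i∈I} S_{p_i}(r)| ≥ 2r + |I|. -/

import Mathlib

/-- Influence sets: `influence G p r` is the set of processes that know
about `p` at the end of round `r`, where `G r` is the round-`r`
communication graph (edges `G r q q'` mean `q` sends to `q'`). -/
def influence {n : ℕ} (G : ℕ → Fin n → Fin n → Prop) (p : Fin n) : ℕ → Set (Fin n)
  | 0 => {p}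
  | r + 1 => influence G p r ∪ {q' | ∃ q ∈ influence G p r, G (r + 1) q q'}

/-- `E` is a directed tree on `Fin n` rooted at `root`, edges oriented away
from the root: every node is reachable from the root, every non-root node
has a unique parent, and the root has no parent. -/
def IsRootedTree {n : ℕ} (E : Fin n → Fin n → Prop) (root : Fin n) : Prop :=
  (∀ v, Relation.ReflTransGen E root v) ∧
  (∀ v, v ≠ root → ∃! u, E u v) ∧
  (∀ u, ¬ E u root)

/-- A leaf of a directed graph: a node with no outgoing edge. -/
def IsLeaf {n : ℕ} (E : Fin n → Fin n → Prop) (v : Fin n) : Prop := ∀ w, ¬ E v w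

/-- The successor relation of the chain `σ 0 → σ 1 → ⋯ → σ (n-1)`. -/
def chainEdge {n : ℕ} (σ : Fin n ≃ Fin n) (u v : Fin n) : Prop :=
  ∃ i j : Fin n, (j : ℕ) = (i : ℕ) + 1 ∧ u = σ i ∧ v = σ j

/-- `E` is a directed chain (rooted path) on all `n` nodes. -/
def IsDirChain {n : ℕ} (E : Fin n → Fin n → Prop) : Prop :=
  ∃ σ : Fin n ≃ Fin n, ∀ u v, E u v ↔ chainEdge σ u v

/-- `E` is an undirected path on all `n` nodes (messages traverse edges in
both directions). -/
def IsUndirPath {n : ℕ} (E : Fin n → Fin n → Prop) : Prop :=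
  ∃ σ : Fin n ≃ Fin n, ∀ u v, E u v ↔ (chainEdge σ u v ∨ chainEdge σ v u)

/-- The influence sets indexed by `I` cover `Π` at time `r`. -/
def isCovering {n : ℕ} (G : ℕ → Fin n → Fin n → Prop) (I : Set (Fin n)) (r : ℕ) : Prop :=
  ⋃ p ∈ I, influence G p r = Set.univ

/-- A strict covering: no member can be removed. -/
def isStrictCovering {n : ℕ} (G : ℕ → Fin n → Fin n → Prop) (I : Set (Fin n)) (r : ℕ) : Prop :=
  isCovering G I r ∧ ∀ p ∈ I, ¬ isCovering G (I \ {p}) r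

/-! ### Auxiliary machinery for the proof of Statement 18 -/

set_option linter.unusedSectionVars false

open Finset

/-! #### Growth of subsets of a path, in position coordinates -/

def bplus (n : ℕ) (B : Finset ℕ) : Finset ℕ :=
  (B ∪ (B.image (· + 1)) ∩ Finset.range n) ∪ (B.erase 0).image (· - 1)

lemma mem_bplus {n m : ℕ} {B : Finset ℕ} :
    m ∈ bplus n B ↔ m ∈ B ∨ (m - 1 ∈ B ∧ 1 ≤ m ∧ m < n) ∨ m + 1 ∈ B := by
  simp only [bplus, mem_union, mem_inter, mem_image, mem_range, mem_erase]
  constructor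
  · rintro ((h | ⟨⟨b, hb, rfl⟩, hlt⟩) | ⟨b, ⟨hb0, hbB⟩, rfl⟩)
    · exact Or.inl h
    · exact Or.inr (Or.inl ⟨by simpa using hb, by omega, hlt⟩)
    · right; right; have : b - 1 + 1 = b := by omega
      rwa [this]
  · rintro (h | ⟨h1, h2, h3⟩ | h)
    · exact Or.inl (Or.inl h)
    · exact Or.inl (Or.inr ⟨⟨m - 1, h1, by omega⟩, h3⟩)
    · exact Or.inr ⟨m + 1, ⟨by omega, h⟩, by omega⟩

lemma subset_bplus {n : ℕ} {B : Finset ℕ} : B ⊆ bplus n B := by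
  intro m hm; exact mem_bplus.2 (Or.inl hm)

lemma bplus_subset_range {n : ℕ} {B : Finset ℕ} (h : B ⊆ Finset.range n) :
    bplus n B ⊆ Finset.range n := by
  intro m hm
  rcases mem_bplus.1 hm with h1 | ⟨_, _, h3⟩ | h1
  · exact h h1
  · exact mem_range.2 h3
  · have := mem_range.1 (h h1); exact mem_range.2 (by omega)

lemma card_add_two {B C : Finset ℕ} (hBC : B ⊆ C) {x y : ℕ} (hx : x ∈ C) (hy : y ∈ C)
    (hxB : x ∉ B) (hyB : y ∉ B) (hxy : x ≠ y) : B.card + 2 ≤ C.card := by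
  have hsub : insert x (insert y B) ⊆ C := by
    intro z hz
    rcases mem_insert.1 hz with rfl | hz
    · exact hx
    · rcases mem_insert.1 hz with rfl | hz
      · exact hy
      · exact hBC hz
  have hx' : x ∉ insert y B := by
    simp only [mem_insert]; push_neg; exact ⟨hxy, hxB⟩
  have h1 : (insert x (insert y B)).card = B.card + 2 := by
    rw [card_insert_of_notMem hx', card_insert_of_notMem hyB]
  calc B.card + 2 = (insert x (insert y B)).card := h1.symm
    _ ≤ C.card := card_le_card hsub

lemma grow {n : ℕ} {B : Finset ℕ} (hB : B.Nonempty) (hsub : B ⊆ Finset.range n)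
    (hne : bplus n B ≠ Finset.range n) :
    (∃ k, 0 < k ∧ k < n ∧ B = Finset.range k) ∨
    (∃ k, 0 < k ∧ k < n ∧ B = Finset.Ico k n) ∨
    B.card + 2 ≤ (bplus n B).card := by
  classical
  set a := B.min' hB with ha
  set b := B.max' hB with hb
  have haB : a ∈ B := B.min'_mem hB
  have hbB : b ∈ B := B.max'_mem hB
  have hbn : b < n := mem_range.1 (hsub hbB)
  have hab : a ≤ b := B.min'_le b hbB
  have hmemlow : ∀ m ∈ B, a ≤ m := fun m hm => B.min'_le m hm
  have hmemhigh : ∀ m ∈ B, m ≤ b := fun m hm => B.le_max' m hm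
  by_cases ha0 : a = 0
  · by_cases hbn1 : b + 1 = n
    · -- a = 0, b = n-1 : complement analysis
      set C := Finset.range n \ B with hC
      have hCne : C.Nonempty := by
        by_contra hemp
        rw [not_nonempty_iff_eq_empty, sdiff_eq_empty_iff_subset] at hemp
        have : B = Finset.range n := le_antisymm hsub hemp
        apply hne
        refine le_antisymm (bplus_subset_range hsub) ?_
        rw [← this]; exact subset_bplus
      set c := C.min' hCne with hc
      set d := C.max' hCne with hd
      have hcC : c ∈ C := C.min'_mem hCne
      have hdC : d ∈ C := C.max'_mem hCne
      have hcB : c ∉ B := (mem_sdiff.1 hcC).2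
      have hdB : d ∉ B := (mem_sdiff.1 hdC).2
      have hcn : c < n := mem_range.1 (mem_sdiff.1 hcC).1
      have hdn : d < n := mem_range.1 (mem_sdiff.1 hdC).1
      have hc1 : 1 ≤ c := by
        rcases Nat.eq_zero_or_pos c with h0 | h; · exfalso; apply hcB; rw [h0, ← ha0]; exact haB
        · exact h
      have hcd : c ≤ d := C.min'_le d hdC
      have hdn2 : d + 1 < n := by
        rcases Nat.lt_or_ge (d+1) n with h | h; · exact h
        · exfalso; have : d = b := by omega
          exact hdB (this ▸ hbB)
      have hcm1B : c - 1 ∈ B := by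
        by_contra hno
        have : c - 1 ∈ C := mem_sdiff.2 ⟨mem_range.2 (by omega), hno⟩
        have := C.min'_le _ this
        omega
      have hdp1B : d + 1 ∈ B := by
        by_contra hno
        have : d + 1 ∈ C := mem_sdiff.2 ⟨mem_range.2 hdn2, hno⟩
        have := C.le_max' _ this
        omega
      by_cases hcd' : c = d
      · -- complement is a single element; bplus = range n
        exfalso; apply hne
        refine le_antisymm (bplus_subset_range hsub) ?_
        intro m hm
        by_cases hmB : m ∈ B
        · exact subset_bplus hmB
        · have hmC : m ∈ C := mem_sdiff.2 ⟨hm, hmB⟩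
          have h1 := C.min'_le m hmC
          have h2 := C.le_max' m hmC
          have : m = c := by omega
          subst this
          exact mem_bplus.2 (Or.inr (Or.inl ⟨hcm1B, hc1, hcn⟩))
      · right; right
        refine card_add_two subset_bplus (x := c) (y := d) ?_ ?_ hcB hdB hcd'
        · exact mem_bplus.2 (Or.inr (Or.inl ⟨hcm1B, hc1, hcn⟩))
        · exact mem_bplus.2 (Or.inr (Or.inr hdp1B))
    · -- a = 0, b+1 < n
      have hbn' : b + 1 < n := by omega
      by_cases hfull : B = Finset.range (b+1)
      · left; exact ⟨b+1, by omega, hbn', hfull⟩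
      · right; right
        have hgap : ∃ m, m ∉ B ∧ m ≤ b := by
          by_contra hno
          push_neg at hno
          apply hfull
          apply le_antisymm
          · intro m hm; exact mem_range.2 (by have := hmemhigh m hm; omega)
          · intro m hm
            by_contra hmB
            have := hno m hmB; have := mem_range.1 hm; omega
        set g := Nat.find hgap with hg
        obtain ⟨hgB, hgb⟩ := Nat.find_spec hgap
        have hg1 : 1 ≤ g := by
          rcases Nat.eq_zero_or_pos g with h0 | h
          · exfalso; apply hgB; rw [← hg, h0, ← ha0]; exact haB
          · exact h
        have hgm1 : g - 1 ∈ B := by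
          by_contra hno
          have := Nat.find_min hgap (m := g - 1) (by omega)
          push_neg at this
          have := this hno
          omega
        refine card_add_two subset_bplus (x := g) (y := b+1) ?_ ?_ hgB ?_ (by omega)
        · exact mem_bplus.2 (Or.inr (Or.inl ⟨hgm1, hg1, by omega⟩))
        · exact mem_bplus.2 (Or.inr (Or.inl ⟨by simpa using hbB, by omega, hbn'⟩))
        · intro hcon; have := hmemhigh _ hcon; omega
  · -- a > 0
    have ha1 : 1 ≤ a := by omega
    by_cases hbn1 : b + 1 = n
    · by_cases hfull : B = Finset.Ico a n
      · right; left; exact ⟨a, by omega, by omega, hfull⟩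
      · right; right
        have hgap : ∃ m, a ≤ m ∧ m ≤ b ∧ m ∉ B := by
          by_contra hno
          push_neg at hno
          apply hfull
          apply le_antisymm
          · intro m hm; exact mem_Ico.2 ⟨hmemlow m hm, by have := hmemhigh m hm; omega⟩
          · intro m hm
            rcases mem_Ico.1 hm with ⟨h1, h2⟩
            by_contra hmB
            exact hmB (hno m h1 (by omega))
        set P : ℕ → Prop := fun m => a ≤ m ∧ m ∉ B with hP
        obtain ⟨m₀, hm₀a, hm₀b, hm₀B⟩ := hgap
        set g := Nat.findGreatest P b with hg
        have hPg : P g := Nat.findGreatest_spec (m := m₀) hm₀b ⟨hm₀a, hm₀B⟩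
        have hag : a ≤ g := hPg.1
        have hgnB : g ∉ B := hPg.2
        have hgle : g ≤ b := Nat.findGreatest_le (P := P) b
        have hgb : g < b := by
          rcases Nat.lt_or_ge g b with h | h; · exact h
          · exfalso; have : g = b := by omega
            exact hgnB (this ▸ hbB)
        have hgp1 : g + 1 ∈ B := by
          by_contra hno
          have := Nat.findGreatest_is_greatest (P := P) (n := b) (k := g+1) (by omega) (by omega)
          exact this ⟨by omega, hno⟩
        have hx : a - 1 ∈ bplus n B :=
          mem_bplus.2 (Or.inr (Or.inr (by simpa [Nat.sub_add_cancel ha1] using haB)))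
        have hy : g ∈ bplus n B := mem_bplus.2 (Or.inr (Or.inr hgp1))
        have hxB : a - 1 ∉ B := by intro hcon; have := hmemlow _ hcon; omega
        have hxy : a - 1 ≠ g := by omega
        exact card_add_two subset_bplus hx hy hxB hgnB hxy
    · -- a > 0, b + 1 < n : two fresh ends
      right; right
      refine card_add_two subset_bplus (x := a - 1) (y := b + 1) ?_ ?_ ?_ ?_ (by omega)
      · exact mem_bplus.2 (Or.inr (Or.inr (by simpa [Nat.sub_add_cancel ha1] using haB)))
      · exact mem_bplus.2 (Or.inr (Or.inl ⟨by simpa using hbB, by omega, by omega⟩))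
      · intro hcon; have := hmemlow _ hcon; omega
      · intro hcon; have := hmemhigh _ hcon; omega

lemma grow_prefix {n k : ℕ} (h0 : 0 < k) (hk : k < n) {B : Finset ℕ} (hB : B = Finset.range k) :
    k + 1 ≤ (bplus n B).card := by
  have hsub : Finset.range (k+1) ⊆ bplus n B := by
    intro m hm
    rcases Nat.lt_or_ge m k with h | h
    · exact subset_bplus (hB ▸ mem_range.2 h)
    · have hmk : m = k := by have := mem_range.1 hm; omega
      subst hmk
      exact mem_bplus.2 (Or.inr (Or.inl ⟨hB ▸ mem_range.2 (by omega), by omega, hk⟩))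
  calc k + 1 = (Finset.range (k+1)).card := (card_range _).symm
    _ ≤ _ := card_le_card hsub

lemma grow_suffix {n k : ℕ} (h0 : 0 < k) (hk : k < n) {B : Finset ℕ} (hB : B = Finset.Ico k n) :
    (n - k) + 1 ≤ (bplus n B).card := by
  have hsub : Finset.Ico (k-1) n ⊆ bplus n B := by
    intro m hm
    rcases mem_Ico.1 hm with ⟨h1, h2⟩
    rcases Nat.lt_or_ge m k with h | h
    · have hmk : m = k - 1 := by omega
      subst hmk
      exact mem_bplus.2 (Or.inr (Or.inr (hB ▸ mem_Ico.2 ⟨by omega, by omega⟩)))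
    · exact subset_bplus (hB ▸ mem_Ico.2 ⟨h, h2⟩)
  calc (n - k) + 1 = (Finset.Ico (k-1) n).card := by rw [Nat.card_Ico]; omega
    _ ≤ _ := card_le_card hsub

/-! #### Bridging vertex sets and position sets -/

section Bridge
variable {n : ℕ} (σ : Fin n ≃ Fin n)

def splus (A : Set (Fin n)) : Set (Fin n) :=
  A ∪ {q' | ∃ q ∈ A, (chainEdge σ q q' ∨ chainEdge σ q' q)}

lemma chainEdge_iff (u v : Fin n) :
    chainEdge σ u v ↔ ((σ.symm v : Fin n) : ℕ) = ((σ.symm u : Fin n) : ℕ) + 1 := by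
  constructor
  · rintro ⟨i, j, hij, rfl, rfl⟩
    simp [hij]
  · intro h
    exact ⟨σ.symm u, σ.symm v, h, by simp, by simp⟩

lemma union_influence_succ {G : ℕ → Fin n → Fin n → Prop} {r : ℕ}
    (hG : ∀ u v, G (r+1) u v ↔ (chainEdge σ u v ∨ chainEdge σ v u)) (J : Finset (Fin n)) :
    (⋃ p ∈ J, influence G p (r+1)) = splus σ (⋃ p ∈ J, influence G p r) := by
  ext x
  simp only [splus, Set.mem_iUnion, Set.mem_union, Set.mem_setOf_eq, influence]
  constructor
  · rintro ⟨p, hp, (h | ⟨q, hq, hGq⟩)⟩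
    · exact Or.inl ⟨p, hp, h⟩
    · exact Or.inr ⟨q, ⟨p, hp, hq⟩, (hG q x).1 hGq⟩
  · rintro (⟨p, hp, h⟩ | ⟨q, ⟨p, hp, hq⟩, hGq⟩)
    · exact ⟨p, hp, Or.inl h⟩
    · exact ⟨p, hp, Or.inr ⟨q, hq, (hG q x).2 hGq⟩⟩

noncomputable def posF (A : Set (Fin n)) : Finset ℕ :=
  (Set.toFinite ((fun v => ((σ.symm v : Fin n) : ℕ)) '' A)).toFinset

lemma mem_posF {A : Set (Fin n)} {m : ℕ} :
    m ∈ posF σ A ↔ ∃ v ∈ A, ((σ.symm v : Fin n) : ℕ) = m := by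
  simp [posF]

lemma posF_subset_range {A : Set (Fin n)} : posF σ A ⊆ Finset.range n := by
  intro m hm
  obtain ⟨v, _, rfl⟩ := (mem_posF σ).1 hm
  exact mem_range.2 (σ.symm v).isLt

lemma card_posF {A : Set (Fin n)} : (posF σ A).card = A.ncard := by
  rw [posF, ← Set.ncard_eq_toFinset_card _ (Set.toFinite _)]
  apply Set.ncard_image_of_injective
  intro a b hab
  exact σ.symm.injective (Fin.val_injective hab)

lemma posF_union {A B : Set (Fin n)} : posF σ (A ∪ B) = posF σ A ∪ posF σ B := by
  ext m
  simp only [mem_posF, mem_union, Set.mem_union]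
  constructor
  · rintro ⟨v, (h | h), rfl⟩
    · exact Or.inl ⟨v, h, rfl⟩
    · exact Or.inr ⟨v, h, rfl⟩
  · rintro (⟨v, h, rfl⟩ | ⟨v, h, rfl⟩)
    · exact ⟨v, Or.inl h, rfl⟩
    · exact ⟨v, Or.inr h, rfl⟩

lemma posF_nonempty {A : Set (Fin n)} (hA : A.Nonempty) : (posF σ A).Nonempty := by
  obtain ⟨v, hv⟩ := hA
  exact ⟨_, (mem_posF σ).2 ⟨v, hv, rfl⟩⟩

lemma posF_splus {A : Set (Fin n)} : posF σ (splus σ A) = bplus n (posF σ A) := by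
  ext m
  rw [mem_posF, mem_bplus]
  constructor
  · rintro ⟨v, hv, rfl⟩
    rcases hv with h | ⟨q, hq, hedge⟩
    · exact Or.inl ((mem_posF σ).2 ⟨v, h, rfl⟩)
    · rcases hedge with h | h
      · rw [chainEdge_iff] at h
        refine Or.inr (Or.inl ⟨?_, by omega, (σ.symm v).isLt⟩)
        rw [mem_posF]
        exact ⟨q, hq, by omega⟩
      · rw [chainEdge_iff] at h
        refine Or.inr (Or.inr ?_)
        rw [mem_posF]
        exact ⟨q, hq, by omega⟩
  · rintro (h | ⟨h1, h2, h3⟩ | h)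
    · obtain ⟨v, hv, rfl⟩ := (mem_posF σ).1 h
      exact ⟨v, Or.inl hv, rfl⟩
    · obtain ⟨q, hq, hval⟩ := (mem_posF σ).1 h1
      refine ⟨σ ⟨m, h3⟩, Or.inr ⟨q, hq, Or.inl ?_⟩, by simp⟩
      rw [chainEdge_iff]
      simp only [Equiv.symm_apply_apply]
      omega
    · obtain ⟨q, hq, hval⟩ := (mem_posF σ).1 h
      have hmn : m < n := by have := (σ.symm q).isLt; omega
      refine ⟨σ ⟨m, hmn⟩, Or.inr ⟨q, hq, Or.inr ?_⟩, by simp⟩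
      rw [chainEdge_iff]
      simp only [Equiv.symm_apply_apply]
      omega

end Bridge

/-! #### Credits from exempt lists -/

section Credits
variable {α : Type*} [DecidableEq α] [Fintype α]

def credit (J : Finset α) (l : List α) : ℕ := l.findIdx (fun y => decide (y ∈ J))

lemma credit_le_length {J : Finset α} {l : List α} : credit J l ≤ l.length :=
  List.findIdx_le_length

lemma credit_eq_length_iff {J : Finset α} {l : List α} :
    credit J l = l.length ↔ ∀ y ∈ l, y ∉ J := by
  rw [credit, List.findIdx_eq_length]
  simp

lemma credit_append {J : Finset α} (l : List α) (x : α) :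
    credit J (l ++ [x]) = credit J l ∨
    (credit J (l ++ [x]) = l.length + 1 ∧ credit J l = l.length ∧ x ∉ J ∧ ∀ y ∈ l, y ∉ J) := by
  rw [credit, List.findIdx_append]
  by_cases hhit : List.findIdx (fun y => decide (y ∈ J)) l < l.length
  · rw [if_pos hhit]; left; rfl
  · have heq : List.findIdx (fun y => decide (y ∈ J)) l = l.length :=
      le_antisymm (List.findIdx_le_length) (by omega)
    rw [if_neg hhit]
    by_cases hx : x ∈ J
    · left
      have h0 : List.findIdx (fun y => decide (y ∈ J)) [x] = 0 := by
        simp [List.findIdx_cons, hx]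
      simp only [h0, credit, heq]
      omega
    · right
      have h1 : List.findIdx (fun y => decide (y ∈ J)) [x] = 1 := by
        simp [List.findIdx_cons, hx]
      refine ⟨by simp only [h1]; omega, heq, hx, ?_⟩
      exact credit_eq_length_iff.1 heq

lemma credit_take_disjoint {J : Finset α} {l : List α} (hnd : l.Nodup) :
    ∃ T : Finset α, T.card = credit J l ∧ (∀ y ∈ T, y ∉ J) ∧ ↑T ⊆ {y | y ∈ l} := by
  refine ⟨(l.take (credit J l)).toFinset, ?_, ?_, ?_⟩
  · rw [List.toFinset_card_of_nodup (hnd.sublist (List.take_sublist _ _))]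
    rw [List.length_take]
    exact min_eq_left credit_le_length
  · intro y hy
    rw [List.mem_toFinset] at hy
    obtain ⟨i, hi, hget⟩ := List.mem_take_iff_getElem.1 hy
    have hlt : i < List.findIdx (fun y => decide (y ∈ J)) l := by
      have := hi; simp only [lt_min_iff] at this; exact this.1
    have := List.not_of_lt_findIdx hlt
    rw [hget] at this
    simpa using this
  · intro y hy
    rw [Finset.mem_coe, List.mem_toFinset] at hy
    exact List.mem_of_mem_take hy

lemma credit_count {J : Finset α} {u w : List α} (hnd : (u ++ w).Nodup) :
    J.card + credit J u + credit J w ≤ Fintype.card α := by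
  obtain ⟨Tu, hTuc, hTuJ, hTul⟩ := credit_take_disjoint (J := J) (List.Nodup.of_append_left hnd)
  obtain ⟨Tw, hTwc, hTwJ, hTwl⟩ := credit_take_disjoint (J := J) (List.Nodup.of_append_right hnd)
  have hdisjuw : Disjoint Tu Tw := by
    rw [Finset.disjoint_left]
    intro a haTu haTw
    have h1 : a ∈ u := hTul haTu
    have h2 : a ∈ w := hTwl haTw
    exact (List.disjoint_of_nodup_append hnd) h1 h2
  have hdisjJu : Disjoint J Tu := by
    rw [Finset.disjoint_right]
    intro a ha
    exact hTuJ a ha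
  have hdisjJw : Disjoint J Tw := by
    rw [Finset.disjoint_right]
    intro a ha
    exact hTwJ a ha
  calc J.card + credit J u + credit J w = (J ∪ Tu ∪ Tw).card := by
        rw [Finset.card_union_of_disjoint, Finset.card_union_of_disjoint hdisjJu, hTuc, hTwc]
        rw [Finset.disjoint_union_left]
        exact ⟨hdisjJw, hdisjuw⟩
    _ ≤ (Finset.univ : Finset α).card := Finset.card_le_card (Finset.subset_univ _)
    _ = Fintype.card α := Finset.card_univ

end Credits

/-! #### The invariant and its preservation -/

section MainProof
variable {n : ℕ}

def UU (G : ℕ → Fin n → Fin n → Prop) (J : Finset (Fin n)) (r : ℕ) : Set (Fin n) :=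
  ⋃ p ∈ J, influence G p r

lemma mem_influence_self (G : ℕ → Fin n → Fin n → Prop) (p : Fin n) (r : ℕ) :
    p ∈ influence G p r := by
  induction r with
  | zero => exact rfl
  | succ r ih => exact Set.mem_union_left _ ih

lemma UU_union (G : ℕ → Fin n → Fin n → Prop) (J1 J2 : Finset (Fin n)) (r : ℕ) :
    UU G (J1 ∪ J2) r = UU G J1 r ∪ UU G J2 r := by
  ext x
  simp only [UU, Set.mem_iUnion, Set.mem_union, Finset.mem_union]
  constructor
  · rintro ⟨p, (h | h), hx⟩
    · exact Or.inl ⟨p, h, hx⟩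
    · exact Or.inr ⟨p, h, hx⟩
  · rintro (⟨p, h, hx⟩ | ⟨p, h, hx⟩)
    · exact ⟨p, Or.inl h, hx⟩
    · exact ⟨p, Or.inr h, hx⟩

def SPInv (G : ℕ → Fin n → Fin n → Prop) (r : ℕ) : Prop :=
  ∃ u w : List (Fin n), u.length = r ∧ w.length = r ∧ (u ++ w).Nodup ∧
    ∀ J : Finset (Fin n), J.Nonempty →
      J.card + credit J u + credit J w ≤ (UU G J r).ncard

lemma spinv_zero (G : ℕ → Fin n → Fin n → Prop) : SPInv G 0 := by
  refine ⟨[], [], rfl, rfl, List.nodup_nil, ?_⟩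
  intro J hJ
  have hUU : UU G J 0 = ↑J := by
    ext x
    simp only [UU, influence, Set.mem_iUnion, Set.mem_singleton_iff, Finset.mem_coe]
    constructor
    · rintro ⟨p, hp, rfl⟩; exact hp
    · intro hx; exact ⟨x, hx, rfl⟩
  rw [hUU, Set.ncard_coe_finset]
  simp [credit]

lemma spinv_step (G : ℕ → Fin n → Fin n → Prop) (r : ℕ) (hn : 2*r + 3 ≤ n)
    (σ : Fin n ≃ Fin n)
    (hG : ∀ a b, G (r+1) a b ↔ (chainEdge σ a b ∨ chainEdge σ b a))
    (hInv : SPInv G r) : SPInv G (r+1) := by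
  classical
  obtain ⟨u, w, hul, hwl, hnd, hinv⟩ := hInv
  have hndu : u.Nodup := hnd.of_append_left
  have hndw : w.Nodup := hnd.of_append_right
  have hduw : List.Disjoint u w := List.disjoint_of_nodup_append hnd
  set B : Finset (Fin n) → Finset ℕ := fun J => posF σ (UU G J r) with hBdef
  have hBcard : ∀ J : Finset (Fin n), (B J).card = (UU G J r).ncard := fun J => card_posF σ
  have hBsub : ∀ J : Finset (Fin n), B J ⊆ Finset.range n := fun J => posF_subset_range σ
  have hBne : ∀ J : Finset (Fin n), J.Nonempty → (B J).Nonempty := by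
    intro J hJ
    obtain ⟨p, hp⟩ := hJ
    apply posF_nonempty σ
    exact ⟨p, Set.mem_biUnion hp (mem_influence_self G p r)⟩
  have hBunion : ∀ J1 J2 : Finset (Fin n), B (J1 ∪ J2) = B J1 ∪ B J2 := by
    intro J1 J2
    show posF σ (UU G (J1 ∪ J2) r) = _
    rw [UU_union, posF_union]
  have hnew : ∀ J : Finset (Fin n), (UU G J (r+1)).ncard = (bplus n (B J)).card := by
    intro J
    have h1 : UU G J (r+1) = splus σ (UU G J r) := union_influence_succ σ hG J
    rw [h1, ← card_posF σ, posF_splus σ]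
  -- the two families of tight end-interval index sets avoiding the lists
  set PP : Finset (Finset (Fin n)) := Finset.univ.filter
    (fun J => J.Nonempty ∧ (∀ y ∈ u ++ w, y ∉ J) ∧ (B J).card = J.card + 2*r ∧
      ∃ k, 0 < k ∧ k < n ∧ B J = Finset.range k) with hPP
  set SS : Finset (Finset (Fin n)) := Finset.univ.filter
    (fun J => J.Nonempty ∧ (∀ y ∈ u ++ w, y ∉ J) ∧ (B J).card = J.card + 2*r ∧
      ∃ k, 0 < k ∧ k < n ∧ B J = Finset.Ico k n) with hSS
  have hdisj_credit : ∀ J : Finset (Fin n), (∀ y ∈ u ++ w, y ∉ J) →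
      credit J u = r ∧ credit J w = r := by
    intro J h
    constructor
    · rw [← hul]; exact credit_eq_length_iff.2 (fun y hy => h y (List.mem_append_left _ hy))
    · rw [← hwl]; exact credit_eq_length_iff.2 (fun y hy => h y (List.mem_append_right _ hy))
  have hkey : ∀ (J1 J2 : Finset (Fin n)), J1.Nonempty →
      (∀ y ∈ u ++ w, y ∉ J1) → (∀ y ∈ u ++ w, y ∉ J2) →
      (B J2).card = J2.card + 2*r → B J1 ⊆ B J2 → J1 ⊆ J2 := by
    intro J1 J2 hne1 hd1 hd2 ht2 hBsub12
    have hUn : B (J1 ∪ J2) = B J2 := by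
      rw [hBunion]; exact Finset.union_eq_right.2 hBsub12
    have hdU : ∀ y ∈ u ++ w, y ∉ J1 ∪ J2 := by
      intro y hy
      simp only [Finset.mem_union]; push_neg
      exact ⟨hd1 y hy, hd2 y hy⟩
    obtain ⟨hcru, hcrw⟩ := hdisj_credit _ hdU
    have hineq := hinv (J1 ∪ J2) (hne1.mono Finset.subset_union_left)
    rw [hcru, hcrw, ← hBcard, hUn, ht2] at hineq
    have hcardle : (J1 ∪ J2).card ≤ J2.card := by omega
    have heq := Finset.eq_of_subset_of_card_le Finset.subset_union_right hcardle
    intro x hx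
    have hxU : x ∈ J1 ∪ J2 := Finset.mem_union_left _ hx
    rwa [← heq] at hxU
  have hMin : ∀ (F : Finset (Finset (Fin n))), F.Nonempty →
      (∀ J1 ∈ F, ∀ J2 ∈ F, J1 ⊆ J2 ∨ J2 ⊆ J1) → ∃ J0 ∈ F, ∀ J ∈ F, J0 ⊆ J := by
    intro F hF hchain
    obtain ⟨J0, hJ0, hmin⟩ := F.exists_min_image (fun J => J.card) hF
    refine ⟨J0, hJ0, fun J hJ => ?_⟩
    rcases hchain J0 hJ0 J hJ with h | h
    · exact h
    · have heq := Finset.eq_of_subset_of_card_le h (hmin J hJ)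
      rw [heq]
  have hPPchain : ∀ J1 ∈ PP, ∀ J2 ∈ PP, J1 ⊆ J2 ∨ J2 ⊆ J1 := by
    intro J1 h1 J2 h2
    rw [hPP, Finset.mem_filter] at h1 h2
    obtain ⟨-, hne1, hd1, ht1, k1, hk10, hk1n, hb1⟩ := h1
    obtain ⟨-, hne2, hd2, ht2, k2, hk20, hk2n, hb2⟩ := h2
    rcases le_total k1 k2 with h | h
    · left
      apply hkey J1 J2 hne1 hd1 hd2 ht2
      rw [hb1, hb2]
      exact Finset.range_subset_range.2 h
    · right
      apply hkey J2 J1 hne2 hd2 hd1 ht1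
      rw [hb1, hb2]
      exact Finset.range_subset_range.2 h
  have hSSchain : ∀ J1 ∈ SS, ∀ J2 ∈ SS, J1 ⊆ J2 ∨ J2 ⊆ J1 := by
    intro J1 h1 J2 h2
    rw [hSS, Finset.mem_filter] at h1 h2
    obtain ⟨-, hne1, hd1, ht1, k1, hk10, hk1n, hb1⟩ := h1
    obtain ⟨-, hne2, hd2, ht2, k2, hk20, hk2n, hb2⟩ := h2
    rcases le_total k1 k2 with h | h
    · right
      apply hkey J2 J1 hne2 hd2 hd1 ht1
      rw [hb1, hb2]
      exact Finset.Ico_subset_Ico h (le_refl n)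
    · left
      apply hkey J1 J2 hne1 hd1 hd2 ht2
      rw [hb1, hb2]
      exact Finset.Ico_subset_Ico h (le_refl n)
  -- fresh element extraction
  have hfresh : ∀ (s : Finset (Fin n)), s.card ≤ 2*r + 2 → ∃ x : Fin n, x ∉ s := by
    intro s hs
    by_contra h
    push_neg at h
    have hle : (Finset.univ : Finset (Fin n)).card ≤ s.card :=
      Finset.card_le_card (fun x _ => h x)
    rw [Finset.card_univ, Fintype.card_fin] at hle
    omega
  have hcardu : u.toFinset.card = r := by
    rw [List.toFinset_card_of_nodup hndu, hul]
  have hcardw : w.toFinset.card = r := by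
    rw [List.toFinset_card_of_nodup hndw, hwl]
  have hmemPPfresh : ∀ J ∈ PP, ∀ x ∈ J, x ∉ u ∧ x ∉ w := by
    intro J hJ x hx
    rw [hPP, Finset.mem_filter] at hJ
    obtain ⟨-, -, hd, -⟩ := hJ
    constructor
    · intro hxu; exact hd x (List.mem_append_left _ hxu) hx
    · intro hxw; exact hd x (List.mem_append_right _ hxw) hx
  have hmemSSfresh : ∀ J ∈ SS, ∀ x ∈ J, x ∉ u ∧ x ∉ w := by
    intro J hJ x hx
    rw [hSS, Finset.mem_filter] at hJ
    obtain ⟨-, -, hd, -⟩ := hJ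
    constructor
    · intro hxu; exact hd x (List.mem_append_left _ hxu) hx
    · intro hxw; exact hd x (List.mem_append_right _ hxw) hx
  have hsel : ∃ xL xR : Fin n, xL ≠ xR ∧ xL ∉ u ∧ xL ∉ w ∧ xR ∉ u ∧ xR ∉ w ∧
      (∀ J ∈ PP, xL ∈ J) ∧ (∀ J ∈ SS, xR ∈ J) := by
    by_cases hPne : PP.Nonempty
    · obtain ⟨JP, hJP, hJPmin⟩ := hMin PP hPne hPPchain
      have hJPne : JP.Nonempty := by
        rw [hPP, Finset.mem_filter] at hJP; exact hJP.2.1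
      by_cases hSne : SS.Nonempty
      · obtain ⟨JS, hJS, hJSmin⟩ := hMin SS hSne hSSchain
        have hJSne : JS.Nonempty := by
          rw [hSS, Finset.mem_filter] at hJS; exact hJS.2.1
        have hJPS : JP ≠ JS := by
          intro heq
          rw [hPP, Finset.mem_filter] at hJP
          rw [hSS, Finset.mem_filter] at hJS
          obtain ⟨-, -, -, -, k1, hk10, hk1n, hb1⟩ := hJP
          obtain ⟨-, -, -, -, k2, hk20, hk2n, hb2⟩ := hJS
          rw [heq, hb2] at hb1
          have h0 : (0:ℕ) ∈ Finset.range k1 := Finset.mem_range.2 hk10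
          rw [← hb1] at h0
          have := (Finset.mem_Ico.1 h0).1
          omega
        by_cases hsub : JP ⊆ JS
        · have hss : JP ⊂ JS := ⟨hsub, fun h => hJPS (le_antisymm hsub h)⟩
          obtain ⟨z, hzS, hzP⟩ := Finset.exists_of_ssubset hss
          obtain ⟨xL, hxL⟩ := hJPne
          refine ⟨xL, z, ?_, (hmemPPfresh JP hJP xL hxL).1, (hmemPPfresh JP hJP xL hxL).2,
            (hmemSSfresh JS hJS z hzS).1, (hmemSSfresh JS hJS z hzS).2,
            fun J hJ => hJPmin J hJ hxL, fun J hJ => hJSmin J hJ hzS⟩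
          intro heq; rw [heq] at hxL; exact hzP hxL
        · rw [Finset.not_subset] at hsub
          obtain ⟨y, hyP, hyS⟩ := hsub
          obtain ⟨xR, hxR⟩ := hJSne
          refine ⟨y, xR, ?_, (hmemPPfresh JP hJP y hyP).1, (hmemPPfresh JP hJP y hyP).2,
            (hmemSSfresh JS hJS xR hxR).1, (hmemSSfresh JS hJS xR hxR).2,
            fun J hJ => hJPmin J hJ hyP, fun J hJ => hJSmin J hJ hxR⟩
          intro heq; rw [← heq] at hxR; exact hyS hxR
      · obtain ⟨xL, hxL⟩ := hJPne
        obtain ⟨xR, hxR⟩ := hfresh (u.toFinset ∪ w.toFinset ∪ {xL})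
          (le_trans (Finset.card_union_le _ _)
            (by have := Finset.card_union_le u.toFinset w.toFinset; simp [hcardu, hcardw] at *; omega))
        simp only [Finset.mem_union, Finset.mem_singleton, not_or] at hxR
        obtain ⟨⟨hxRu, hxRw⟩, hxRL⟩ := hxR
        refine ⟨xL, xR, fun h => hxRL h.symm,
          (hmemPPfresh JP hJP xL hxL).1, (hmemPPfresh JP hJP xL hxL).2,
          fun h => hxRu (List.mem_toFinset.2 h), fun h => hxRw (List.mem_toFinset.2 h),
          fun J hJ => hJPmin J hJ hxL, fun J hJ => absurd ⟨J, hJ⟩ hSne⟩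
    · by_cases hSne : SS.Nonempty
      · obtain ⟨JS, hJS, hJSmin⟩ := hMin SS hSne hSSchain
        have hJSne : JS.Nonempty := by
          rw [hSS, Finset.mem_filter] at hJS; exact hJS.2.1
        obtain ⟨xR, hxR⟩ := hJSne
        obtain ⟨xL, hxL⟩ := hfresh (u.toFinset ∪ w.toFinset ∪ {xR})
          (le_trans (Finset.card_union_le _ _)
            (by have := Finset.card_union_le u.toFinset w.toFinset; simp [hcardu, hcardw] at *; omega))
        simp only [Finset.mem_union, Finset.mem_singleton, not_or] at hxL
        obtain ⟨⟨hxLu, hxLw⟩, hxLR⟩ := hxL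
        refine ⟨xL, xR, hxLR,
          fun h => hxLu (List.mem_toFinset.2 h), fun h => hxLw (List.mem_toFinset.2 h),
          (hmemSSfresh JS hJS xR hxR).1, (hmemSSfresh JS hJS xR hxR).2,
          fun J hJ => absurd ⟨J, hJ⟩ hPne, fun J hJ => hJSmin J hJ hxR⟩
      · obtain ⟨xL, hxL⟩ := hfresh (u.toFinset ∪ w.toFinset)
          (le_trans (Finset.card_union_le _ _) (by simp [hcardu, hcardw]; omega))
        simp only [Finset.mem_union, not_or] at hxL
        obtain ⟨hxLu, hxLw⟩ := hxL
        obtain ⟨xR, hxR⟩ := hfresh (u.toFinset ∪ w.toFinset ∪ {xL})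
          (le_trans (Finset.card_union_le _ _)
            (by have := Finset.card_union_le u.toFinset w.toFinset; simp [hcardu, hcardw] at *; omega))
        simp only [Finset.mem_union, Finset.mem_singleton, not_or] at hxR
        obtain ⟨⟨hxRu, hxRw⟩, hxRL⟩ := hxR
        refine ⟨xL, xR, fun h => hxRL h.symm,
          fun h => hxLu (List.mem_toFinset.2 h), fun h => hxLw (List.mem_toFinset.2 h),
          fun h => hxRu (List.mem_toFinset.2 h), fun h => hxRw (List.mem_toFinset.2 h),
          fun J hJ => absurd ⟨J, hJ⟩ hPne, fun J hJ => absurd ⟨J, hJ⟩ hSne⟩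
  obtain ⟨xL, xR, hLR, hLu, hLw, hRu, hRw, hGoodL, hGoodR⟩ := hsel
  refine ⟨u ++ [xL], w ++ [xR], by simp [hul], by simp [hwl], ?_, ?_⟩
  · -- nodup
    rw [List.nodup_append]
    refine ⟨?_, ?_, ?_⟩
    · rw [List.nodup_append]
      refine ⟨hndu, List.nodup_singleton _, ?_⟩
      intro a ha b hmem hab
      subst hab
      rw [List.mem_singleton] at hmem
      exact hLu (hmem ▸ ha)
    · rw [List.nodup_append]
      refine ⟨hndw, List.nodup_singleton _, ?_⟩
      intro a ha b hmem hab
      subst hab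
      rw [List.mem_singleton] at hmem
      exact hRw (hmem ▸ ha)
    · intro a ha b hmem hab
      subst hab
      rw [List.mem_append] at ha hmem
      rcases ha with ha | ha
      · rcases hmem with hm | hm
        · exact hduw ha hm
        · rw [List.mem_singleton] at hm
          exact hRu (hm ▸ ha)
      · rw [List.mem_singleton] at ha
        subst ha
        rcases hmem with hm | hm
        · exact hLw hm
        · rw [List.mem_singleton] at hm
          exact hLR hm
  · -- main inequality
    intro J hJne
    rw [hnew J]
    have hold := hinv J hJne
    rw [← hBcard] at hold
    have hcuB : credit J (u ++ [xL]) ≤ credit J u + 1 := by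
      rcases credit_append (J := J) u xL with h | ⟨h1, h2, -, -⟩
      · omega
      · omega
    have hcwB : credit J (w ++ [xR]) ≤ credit J w + 1 := by
      rcases credit_append (J := J) w xR with h | ⟨h1, h2, -, -⟩
      · omega
      · omega
    by_cases hful : bplus n (B J) = Finset.range n
    · rw [hful, Finset.card_range]
      have := credit_count (J := J) (u := u ++ [xL]) (w := w ++ [xR]) (by
        -- reuse nodup proof: reconstruct
        rw [List.nodup_append]
        refine ⟨?_, ?_, ?_⟩
        · rw [List.nodup_append]
          refine ⟨hndu, List.nodup_singleton _, ?_⟩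
          intro a ha b hmem hab
          subst hab
          rw [List.mem_singleton] at hmem
          exact hLu (hmem ▸ ha)
        · rw [List.nodup_append]
          refine ⟨hndw, List.nodup_singleton _, ?_⟩
          intro a ha b hmem hab
          subst hab
          rw [List.mem_singleton] at hmem
          exact hRw (hmem ▸ ha)
        · intro a ha b hmem hab
          subst hab
          rw [List.mem_append] at ha hmem
          rcases ha with ha | ha
          · rcases hmem with hm | hm
            · exact hduw ha hm
            · rw [List.mem_singleton] at hm
              exact hRu (hm ▸ ha)
          · rw [List.mem_singleton] at ha
            subst ha
            rcases hmem with hm | hm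
            · exact hLw hm
            · rw [List.mem_singleton] at hm
              exact hLR hm)
      rwa [Fintype.card_fin] at this
    · rcases grow (hBne J hJne) (hBsub J) hful with ⟨k, hk0, hkn, hBeq⟩ | ⟨k, hk0, hkn, hBeq⟩ | h2
      · -- prefix case
        have hgrow1 : (B J).card + 1 ≤ (bplus n (B J)).card := by
          have h1 := grow_prefix hk0 hkn hBeq
          have h2 : (B J).card = k := by rw [hBeq, Finset.card_range]
          omega
        rcases credit_append (J := J) u xL with hcu | ⟨hcu1, hcu2, hxLJ, hudisj⟩
        · omega
        · rcases credit_append (J := J) w xR with hcw | ⟨hcw1, hcw2, hxRJ, hwdisj⟩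
          · omega
          · by_cases htight : (B J).card = J.card + 2*r
            · exfalso
              apply hxLJ
              apply hGoodL
              rw [hPP, Finset.mem_filter]
              refine ⟨Finset.mem_univ _, hJne, ?_, htight, k, hk0, hkn, hBeq⟩
              intro y hy
              rcases List.mem_append.1 hy with h | h
              · exact hudisj y h
              · exact hwdisj y h
            · rw [hul] at hcu2
              rw [hwl] at hcw2
              rw [hul] at hcu1
              rw [hwl] at hcw1
              omega
      · -- suffix case
        have hgrow1 : (B J).card + 1 ≤ (bplus n (B J)).card := by
          have h1 := grow_suffix hk0 hkn hBeq
          have h2 : (B J).card = n - k := by rw [hBeq, Nat.card_Ico]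
          omega
        rcases credit_append (J := J) u xL with hcu | ⟨hcu1, hcu2, hxLJ, hudisj⟩
        · omega
        · rcases credit_append (J := J) w xR with hcw | ⟨hcw1, hcw2, hxRJ, hwdisj⟩
          · omega
          · by_cases htight : (B J).card = J.card + 2*r
            · exfalso
              apply hxRJ
              apply hGoodR
              rw [hSS, Finset.mem_filter]
              refine ⟨Finset.mem_univ _, hJne, ?_, htight, k, hk0, hkn, hBeq⟩
              intro y hy
              rcases List.mem_append.1 hy with h | h
              · exact hudisj y h
              · exact hwdisj y h
            · rw [hul] at hcu2
              rw [hwl] at hcw2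
              rw [hul] at hcu1
              rw [hwl] at hcw1
              omega
      · omega

lemma spinv_all (G : ℕ → Fin n → Fin n → Prop)
    (hpath : ∀ t, 1 ≤ t → IsUndirPath (G t)) :
    ∀ r, 2*r ≤ n - 1 → SPInv G r := by
  intro r
  induction r with
  | zero => intro _; exact spinv_zero G
  | succ s ih =>
    intro hle
    have hs : 2*s ≤ n - 1 := by omega
    obtain ⟨σ, hσ⟩ := hpath (s+1) (by omega)
    exact spinv_step G s (by omega) σ hσ (ih hs)

end MainProof

/-- for any sequence of undirected paths on `n ≥ 1` nodes and
any `r ≤ (n-1)/2` (i.e. `2r ≤ n - 1`), there are `n - 2r` influence sets at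
time `r`, each of size at least `2r + 1`, such that the union of any `|I|`
of them has size at least `2r + |I|`. -/
theorem undirected_paths_influence_structure {n : ℕ} (hn : 1 ≤ n)
    (G : ℕ → Fin n → Fin n → Prop)
    (hpath : ∀ t, 1 ≤ t → IsUndirPath (G t))
    (r : ℕ) (hr : 2 * r ≤ n - 1) :
    ∃ ps : Fin (n - 2 * r) → Fin n, Function.Injective ps ∧
      (∀ i, 2 * r + 1 ≤ (influence G (ps i) r).ncard) ∧
      ∀ I : Finset (Fin (n - 2 * r)), I.Nonempty →
        2 * r + I.card ≤ (⋃ i ∈ I, influence G (ps i) r).ncard := by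
  classical
  obtain ⟨u, w, hul, hwl, hnd, hinv⟩ := spinv_all G hpath r hr
  have hndu : u.Nodup := hnd.of_append_left
  have hndw : w.Nodup := hnd.of_append_right
  set Good : Finset (Fin n) := Finset.univ \ (u.toFinset ∪ w.toFinset) with hGood
  have hcu : u.toFinset.card = r := by rw [List.toFinset_card_of_nodup hndu, hul]
  have hcw : w.toFinset.card = r := by rw [List.toFinset_card_of_nodup hndw, hwl]
  have hdisj : Disjoint u.toFinset w.toFinset := by
    rw [Finset.disjoint_left]
    intro a ha hb
    exact (List.disjoint_of_nodup_append hnd) (List.mem_toFinset.1 ha) (List.mem_toFinset.1 hb)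
  have hGc : Good.card = n - 2*r := by
    rw [hGood, Finset.card_sdiff_of_subset (Finset.subset_univ _), Finset.card_union_of_disjoint hdisj,
      hcu, hcw, Finset.card_univ, Fintype.card_fin]
    omega
  have hGc' : Good.card = n - 2*r := hGc
  set ps : Fin (n - 2*r) → Fin n := fun i => ((Good.orderIsoOfFin hGc') i : Fin n) with hps
  have hpsmem : ∀ i, ps i ∈ Good := fun i => ((Good.orderIsoOfFin hGc') i).2
  have hpsinj : Function.Injective ps := by
    intro a b hab
    exact (Good.orderIsoOfFin hGc').injective (Subtype.ext hab)
  have hdisG : ∀ (J : Finset (Fin n)), J ⊆ Good → credit J u = r ∧ credit J w = r := by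
    intro J hJ
    have hdd : ∀ y, y ∈ J → y ∉ u ∧ y ∉ w := by
      intro y hy
      have := hJ hy
      rw [hGood, Finset.mem_sdiff] at this
      constructor
      · intro hc; exact this.2 (Finset.mem_union_left _ (List.mem_toFinset.2 hc))
      · intro hc; exact this.2 (Finset.mem_union_right _ (List.mem_toFinset.2 hc))
    constructor
    · rw [← hul]
      apply credit_eq_length_iff.2
      intro y hy hyJ
      exact (hdd y hyJ).1 hy
    · rw [← hwl]
      apply credit_eq_length_iff.2
      intro y hy hyJ
      exact (hdd y hyJ).2 hy
  refine ⟨ps, hpsinj, ?_, ?_⟩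
  · intro i
    have h := hinv {ps i} ⟨ps i, Finset.mem_singleton_self _⟩
    have hcred := hdisG {ps i} (by
      intro x hx
      rw [Finset.mem_singleton] at hx
      exact hx ▸ hpsmem i)
    have hUU : UU G {ps i} r = influence G (ps i) r := by
      ext x
      simp [UU]
    rw [hUU, hcred.1, hcred.2, Finset.card_singleton] at h
    omega
  · intro I hI
    set J := I.image ps with hJ
    have hJne : J.Nonempty := hI.image ps
    have hJcard : J.card = I.card := Finset.card_image_of_injective I hpsinj
    have hJG : J ⊆ Good := by
      intro x hx
      obtain ⟨i, -, rfl⟩ := Finset.mem_image.1 hx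
      exact hpsmem i
    have h := hinv J hJne
    have hcred := hdisG J hJG
    have hUU : UU G J r = ⋃ i ∈ I, influence G (ps i) r := by
      ext x
      simp only [UU, hJ, Set.mem_iUnion, Finset.mem_image]
      constructor
      · rintro ⟨p, ⟨i, hi, rfl⟩, hx⟩
        exact ⟨i, hi, hx⟩
      · rintro ⟨i, hi, hx⟩
        exact ⟨ps i, ⟨i, hi, rfl⟩, hx⟩
    rw [hUU, hcred.1, hcred.2, hJcard] at h
    omega
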